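/- For any initial matrix a₀ ∈ M_n with τ(a₀) = 0 and |a₀|² = 1, the equation a_t = Δa + λ(t)a with λ(t) = -⟨Δa,a⟩/⟨a,a⟩ has a global solution a: [0,∞) → M_n with a(0) = a₀, |a(t)|² = 1 for all t > 0. -/

import Mathlib

open Matrix NormedSpace

attribute [local instance] Matrix.normedAddCommGroup Matrix.normedSpace

noncomputable def matLap {n : ℕ} (x y c : Matrix (Fin n) (Fin n) ℂ) :
    Matrix (Fin n) (Fin n) ℂ :=
  (y * (y * c - c * y) - (y * c - c * y) * y) +
    ((c * x - x * c) * x - x * (c * x - x * c))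

noncomputable def rInner {n : ℕ} (a b : Matrix (Fin n) (Fin n) ℂ) : ℝ :=
  ((aᴴ * b).trace).re

section aux
variable {n : ℕ}

lemma rInner_eq_sum (a b : Matrix (Fin n) (Fin n) ℂ) :
    rInner a b = ∑ j, ∑ i, ((starRingEnd ℂ) (a i j) * b i j).re := by
  simp [rInner, Matrix.trace, Matrix.mul_apply, Matrix.diag, Complex.re_sum,
    Matrix.conjTranspose_apply]

lemma rInner_comm (a b : Matrix (Fin n) (Fin n) ℂ) : rInner a b = rInner b a := by
  simp only [rInner_eq_sum, Complex.mul_re, Complex.conj_re, Complex.conj_im]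
  congr 1; ext j; congr 1; ext i; ring

lemma rInner_add_left (a b c : Matrix (Fin n) (Fin n) ℂ) :
    rInner (a + b) c = rInner a c + rInner b c := by
  simp [rInner_eq_sum, add_mul, Finset.sum_add_distrib]

lemma rInner_add_right (a b c : Matrix (Fin n) (Fin n) ℂ) :
    rInner a (b + c) = rInner a b + rInner a c := by
  simp [rInner_eq_sum, mul_add, Finset.sum_add_distrib]

lemma rInner_smul_left (r : ℝ) (a b : Matrix (Fin n) (Fin n) ℂ) :
    rInner (r • a) b = r * rInner a b := by
  simp only [rInner_eq_sum, Matrix.smul_apply, Complex.mul_re, Complex.conj_re,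
    Complex.conj_im, Complex.smul_re, Complex.smul_im, Finset.mul_sum, smul_eq_mul]
  congr 1; ext j; congr 1; ext i; ring

lemma rInner_smul_right (r : ℝ) (a b : Matrix (Fin n) (Fin n) ℂ) :
    rInner a (r • b) = r * rInner a b := by
  rw [rInner_comm, rInner_smul_left, rInner_comm]

lemma rInner_self_nonneg (a : Matrix (Fin n) (Fin n) ℂ) : 0 ≤ rInner a a := by
  rw [rInner_eq_sum]
  refine Finset.sum_nonneg fun j _ => Finset.sum_nonneg fun i _ => ?_
  rw [mul_comm, Complex.mul_conj]
  exact_mod_cast Complex.normSq_nonneg _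

lemma rInner_self_pos {a : Matrix (Fin n) (Fin n) ℂ} (ha : a ≠ 0) : 0 < rInner a a := by
  obtain ⟨i, j, hij⟩ : ∃ i j, a i j ≠ 0 := by
    by_contra h; push_neg at h; exact ha (by ext i j; simp [h i j])
  rw [rInner_eq_sum]
  refine Finset.sum_pos' (fun j _ => Finset.sum_nonneg fun i _ => ?_) ⟨j, Finset.mem_univ j, ?_⟩
  · rw [mul_comm, Complex.mul_conj]; exact_mod_cast Complex.normSq_nonneg _
  · refine Finset.sum_pos' (fun i _ => ?_) ⟨i, Finset.mem_univ i, ?_⟩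
    · rw [mul_comm, Complex.mul_conj]; exact_mod_cast Complex.normSq_nonneg _
    · rw [mul_comm, Complex.mul_conj]
      exact_mod_cast Complex.normSq_pos.mpr hij

noncomputable abbrev matTop : TopologicalSpace (Matrix (Fin n) (Fin n) ℂ) :=
  Matrix.normedAddCommGroup.toUniformSpace.toTopologicalSpace
noncomputable abbrev matUnif : UniformSpace (Matrix (Fin n) (Fin n) ℂ) :=
  Matrix.normedAddCommGroup.toUniformSpace
attribute [local instance] matTop matUnif

variable (x y : Matrix (Fin n) (Fin n) ℂ)

/-- the Laplacian as a linear map -/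
noncomputable def lapLM : Matrix (Fin n) (Fin n) ℂ →ₗ[ℝ] Matrix (Fin n) (Fin n) ℂ where
  toFun := matLap x y
  map_add' a b := by
    simp only [matLap, mul_add, add_mul, mul_sub, sub_mul]; abel
  map_smul' r a := by
    simp only [matLap, RingHom.id_apply, mul_sub, sub_mul, mul_smul_comm, smul_mul_assoc,
      smul_sub, smul_add]

/-- the Laplacian as a continuous linear map -/
noncomputable def lapCLM : Matrix (Fin n) (Fin n) ℂ →L[ℝ] Matrix (Fin n) (Fin n) ℂ :=
  LinearMap.toContinuousLinearMap (lapLM x y)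

@[simp] lemma lapCLM_apply (c : Matrix (Fin n) (Fin n) ℂ) : lapCLM x y c = matLap x y c := rfl

/-- rInner as a continuous bilinear map -/
noncomputable def rInnerCLM :
    Matrix (Fin n) (Fin n) ℂ →L[ℝ] Matrix (Fin n) (Fin n) ℂ →L[ℝ] ℝ :=
  LinearMap.toContinuousLinearMap
    { toFun := fun a => LinearMap.toContinuousLinearMap
        { toFun := fun b => rInner a b
          map_add' := fun b c => rInner_add_right a b c
          map_smul' := fun r b => by simpa using rInner_smul_right r a b }
      map_add' := fun a b => by
        ext c; simp [rInner_add_left]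
      map_smul' := fun r a => by
        ext c; simp [rInner_smul_left] }

@[simp] lemma rInnerCLM_apply (a b : Matrix (Fin n) (Fin n) ℂ) :
    rInnerCLM (n := n) a b = rInner a b := rfl

lemma hasDerivAt_rInner {b c : ℝ → Matrix (Fin n) (Fin n) ℂ}
    {b' c' : Matrix (Fin n) (Fin n) ℂ} {t : ℝ}
    (hb : HasDerivAt b b' t) (hc : HasDerivAt c c' t) :
    HasDerivAt (fun t => rInner (b t) (c t)) (rInner b' (c t) + rInner (b t) c') t := by
  have h1 : HasDerivAt (fun t => rInnerCLM (n := n) (b t)) (rInnerCLM (n := n) b') t :=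
    (rInnerCLM (n := n)).hasFDerivAt.comp_hasDerivAt t hb
  simpa using h1.clm_apply hc

end aux

/-- for any a₀ with τ(a₀) = 0 and |a₀|² = 1, the equation
a_t = Δa + λ(t)a with λ(t) = -⟨Δa,a⟩/⟨a,a⟩ has a global solution with a(0) = a₀
and |a(t)|² = 1 for all t > 0. -/
theorem global_existence {n : ℕ} (x y : Matrix (Fin n) (Fin n) ℂ)
    (hx : x.IsHermitian) (hy : y.IsHermitian)
    (a₀ : Matrix (Fin n) (Fin n) ℂ) (htr : a₀.trace = 0) (hn : rInner a₀ a₀ = 1) :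
    ∃ a : ℝ → Matrix (Fin n) (Fin n) ℂ, a 0 = a₀ ∧
      (∀ t : ℝ, HasDerivAt a
        (matLap x y (a t) +
          (-(rInner (matLap x y (a t)) (a t)) / rInner (a t) (a t)) • a t) t) ∧
      ∀ t : ℝ, 0 < t → rInner (a t) (a t) = 1 := by
  classical
  letI := @matTop n
  letI := @matUnif n
  set L := lapCLM x y with hL
  set b : ℝ → Matrix (Fin n) (Fin n) ℂ := fun t => (exp (t • L)) a₀ with hbdef
  have ha₀ : a₀ ≠ 0 := by
    intro h; rw [h] at hn; simp [rInner] at hn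
  -- b never vanishes
  have hbne : ∀ t, b t ≠ 0 := by
    intro t h
    have h2 : (exp (-(t • L)) * exp (t • L)) a₀ = 0 := by
      rw [ContinuousLinearMap.mul_apply]
      show (exp (-(t • L))) (b t) = 0
      rw [h]; simp
    erw [← NormedSpace.exp_add_of_commute_of_mem_ball (𝕂 := ℝ)
      (𝔸 := Matrix (Fin n) (Fin n) ℂ →L[ℝ] Matrix (Fin n) (Fin n) ℂ)
      (Commute.neg_left (Commute.refl (t • L)))
      ((NormedSpace.expSeries_radius_eq_top ℝ (Matrix (Fin n) (Fin n) ℂ →L[ℝ] Matrix (Fin n) (Fin n) ℂ)).symm ▸ edist_lt_top _ _)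
      ((NormedSpace.expSeries_radius_eq_top ℝ (Matrix (Fin n) (Fin n) ℂ →L[ℝ] Matrix (Fin n) (Fin n) ℂ)).symm ▸ edist_lt_top _ _)] at h2
    rw [neg_add_cancel,
      exp_zero, ContinuousLinearMap.one_apply] at h2
    exact ha₀ h2
  have hb0 : b 0 = a₀ := by
    show (exp ((0:ℝ) • L)) a₀ = a₀
    have h0 : (0:ℝ) • L = 0 := zero_smul ℝ L
    rw [h0, exp_zero, ContinuousLinearMap.one_apply]
  -- derivative of b
  have hbderiv : ∀ t, HasDerivAt b (L (b t)) t := by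
    intro t
    have h := hasDerivAt_exp_smul_const' (𝕂 := ℝ) L t
    have h2 := h.clm_apply (hasDerivAt_const t a₀)
    simpa [ContinuousLinearMap.mul_apply, hbdef] using h2
  set r : ℝ → ℝ := fun t => rInner (b t) (b t) with hrdef
  have hrpos : ∀ t, 0 < r t := fun t => rInner_self_pos (hbne t)
  have hrderiv : ∀ t, HasDerivAt r (2 * rInner (L (b t)) (b t)) t := by
    intro t
    have h := hasDerivAt_rInner (hbderiv t) (hbderiv t)
    rw [rInner_comm (b t) (L (b t))] at h
    convert h using 1; ring
  set s : ℝ → ℝ := fun t => Real.sqrt (r t) with hsdef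
  have hspos : ∀ t, 0 < s t := fun t => Real.sqrt_pos.mpr (hrpos t)
  have hs_sq : ∀ t, s t * s t = r t := fun t => Real.mul_self_sqrt (hrpos t).le
  set g : ℝ → ℝ := fun t => (s t)⁻¹ with hgdef
  set a : ℝ → Matrix (Fin n) (Fin n) ℂ := fun t => g t • b t with hadef
  have hra : ∀ t, rInner (a t) (a t) = 1 := by
    intro t
    have h1 : rInner (a t) (a t) = g t * (g t * rInner (b t) (b t)) := by
      show rInner (g t • b t) (g t • b t) = _
      rw [rInner_smul_left, rInner_smul_right]
    rw [h1]
    have hs := (hspos t).ne'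
    show (s t)⁻¹ * ((s t)⁻¹ * r t) = 1
    field_simp
    linarith [hs_sq t]
  refine ⟨a, ?_, ?_, fun t _ => hra t⟩
  · have hr0 : r 0 = 1 := by show rInner (b 0) (b 0) = 1; rw [hb0]; exact hn
    show (Real.sqrt (r 0))⁻¹ • b 0 = a₀
    rw [hr0, hb0]; simp
  · intro t
    have hsd : HasDerivAt s (1 / (2 * Real.sqrt (r t)) * (2 * rInner (L (b t)) (b t))) t :=
      (Real.hasDerivAt_sqrt (hrpos t).ne').comp t (hrderiv t)
    have hgd : HasDerivAt g
        (-(1 / (2 * Real.sqrt (r t)) * (2 * rInner (L (b t)) (b t))) / s t ^ 2) t :=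
      hsd.inv (hspos t).ne'
    have had := hgd.smul (hbderiv t)
    have key : matLap x y (a t) +
        (-(rInner (matLap x y (a t)) (a t)) / rInner (a t) (a t)) • a t
        = g t • L (b t)
          + (-(1 / (2 * Real.sqrt (r t)) * (2 * rInner (L (b t)) (b t))) / s t ^ 2) • b t := by
      have hLa : matLap x y (a t) = g t • L (b t) := by
        show L (g t • b t) = g t • L (b t)
        exact map_smul L _ _
      rw [hra t, hLa]
      have ha' : a t = g t • b t := rfl
      rw [ha', rInner_smul_left, rInner_smul_right, smul_smul]
      have hs := (hspos t).ne'
      have hsq : Real.sqrt (r t) = s t := rfl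
      have hcoef : -(g t * (g t * rInner (L (b t)) (b t))) / 1 * g t
          = -(1 / (2 * Real.sqrt (r t)) * (2 * rInner (L (b t)) (b t))) / s t ^ 2 := by
        rw [hsq]
        show -((s t)⁻¹ * ((s t)⁻¹ * rInner (L (b t)) (b t))) / 1 * (s t)⁻¹
          = -(1 / (2 * s t) * (2 * rInner (L (b t)) (b t))) / s t ^ 2
        field_simp
      rw [hcoef]
    rw [key]
    exact had
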